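/- Let S = {a_1, ..., a_n} be a finite multiset of positive integers and let G(S) be the graph constructed from S by the reduction. If S can be partitioned into two sub-multisets S_1 and S_2 with equal sums, then G(S) admits a Neighborhood Balanced Coloring: color v_1 blue and v_2 red, color the other two vertices of the K_{2,2} red and blue respectively, and for each a_i-pack with a_i in S_1 color its base vertex blue, all its numeric vertices red, and exactly half of its support vertices blue and half red, and symmetrically (base red, numeric vertices blue, half the support vertices of each color) for each pack with a_i in S_2. -/

import Mathlib

/-- A *Neighborhood Balanced Coloring* of a graph `G`: a red/blue coloring
(`true` = red, `false` = blue) such that every vertex has as many red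
(open) neighbors as blue neighbors. -/
def IsNBC {V : Type*} (G : SimpleGraph V) (c : V → Bool) : Prop :=
  ∀ v : V, Nat.card {w : V // G.Adj v w ∧ c w = true}
         = Nat.card {w : V // G.Adj v w ∧ c w = false}

/-- Vertex type of an `m`-pack: for `m ≥ 2` one base vertex (`Sum.inl`),
`2m` support vertices (`Sum.inr (Sum.inl (i, b))`) and `m` numeric vertices
(`Sum.inr (Sum.inr i)`); a `1`-pack is a single numeric vertex. -/
def PackV : ℕ → Type
  | 0 => Empty
  | 1 => Unit
  | (m + 2) => Unit ⊕ ((Fin (m + 2) × Bool) ⊕ Fin (m + 2))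

/-- Base relation generating the edges of an `m`-pack: the base vertex is
adjacent to every support vertex, and the support vertex `(i, b)` is adjacent
to the numeric vertex `i` (so every numeric vertex is adjacent to exactly two
support vertices, and every support vertex to exactly one numeric vertex).
A `1`-pack has no edges. -/
def packRel : (m : ℕ) → PackV m → PackV m → Prop
  | 0 => fun x _ => x.elim
  | 1 => fun _ _ => False
  | (_ + 2) => fun x y =>
      match x, y with
      | Sum.inl _, Sum.inr (Sum.inl _) => True
      | Sum.inr (Sum.inl (i, _)), Sum.inr (Sum.inr j) => i = j
      | _, _ => False

/-- The `m`-pack graph. -/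
def Pack (m : ℕ) : SimpleGraph (PackV m) := SimpleGraph.fromRel (packRel m)

/-- The `i`-th numeric vertex of an `m`-pack. -/
def packNumeric : (m : ℕ) → Fin m → PackV m
  | 0, i => i.elim0
  | 1, _ => ()
  | (_ + 2), i => Sum.inr (Sum.inr i)

/-- The predicate selecting the numeric vertices of an `m`-pack. -/
def isNumericV : (m : ℕ) → PackV m → Prop
  | 0 => fun _ => False
  | 1 => fun _ => True
  | (_ + 2) => fun x => match x with | Sum.inr (Sum.inr _) => True | _ => False

/-- The predicate selecting the base vertex of an `m`-pack. -/
def isBaseV : (m : ℕ) → PackV m → Prop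
  | 0 => fun _ => False
  | 1 => fun _ => False
  | (_ + 2) => fun x => match x with | Sum.inl _ => True | _ => False

/-- The predicate selecting the support vertices of an `m`-pack. -/
def isSupportV : (m : ℕ) → PackV m → Prop
  | 0 => fun _ => False
  | 1 => fun _ => False
  | (_ + 2) => fun x => match x with | Sum.inr (Sum.inl _) => True | _ => False

/-- Vertex type of the graph `G(S)` built from the multiset
`S = {a 0, …, a (n-1)}`: the four vertices of a `K_{2,2}`
(`Sum.inl (Sum.inl 0)` and `Sum.inl (Sum.inl 1)` being the two vertices
`v₁, v₂` of one part) together with a disjoint `a i`-pack for each `i`. -/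
def GSV (n : ℕ) (a : Fin n → ℕ) : Type :=
  (Fin 2 ⊕ Fin 2) ⊕ (Σ i : Fin n, PackV (a i))

/-- Base relation generating the edges of `G(S)`: the `K_{2,2}` edges, the
internal edges of each pack, and the edges joining `v₁` and `v₂` to every
numeric vertex of every pack. -/
def GSRel (n : ℕ) (a : Fin n → ℕ) : GSV n a → GSV n a → Prop
  | Sum.inl (Sum.inl _), Sum.inl (Sum.inr _) => True
  | Sum.inl (Sum.inl _), Sum.inr ⟨i, p⟩ => isNumericV (a i) p
  | Sum.inr ⟨i, p⟩, Sum.inr ⟨j, q⟩ => ∃ h : i = j, packRel (a j) (h ▸ p) q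
  | _, _ => False

/-- The graph `G(S)` of the reduction. -/
def GS (n : ℕ) (a : Fin n → ℕ) : SimpleGraph (GSV n a) :=
  SimpleGraph.fromRel (GSRel n a)

/-- The `j`-th numeric vertex of the `i`-th pack, as a vertex of `G(S)`. -/
def numVert (n : ℕ) (a : Fin n → ℕ) (i : Fin n) (j : Fin (a i)) : GSV n a :=
  Sum.inr ⟨i, packNumeric (a i) j⟩

attribute [reducible] GSV PackV

section Aux

instance instFintypePackV : (m : ℕ) → Fintype (PackV m)
  | 0 => inferInstanceAs (Fintype Empty)
  | 1 => inferInstanceAs (Fintype Unit)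
  | (m + 2) => inferInstanceAs (Fintype (Unit ⊕ ((Fin (m + 2) × Bool) ⊕ Fin (m + 2))))

@[simp] lemma pv_inl_inj {m : ℕ} (x y : Unit) :
    @Eq (PackV (m + 2)) (Sum.inl x) (Sum.inl y) ↔ True := by
  cases x; cases y; exact iff_of_true rfl trivial

@[simp] lemma pv_inr_inj {m : ℕ} (x y : (Fin (m + 2) × Bool) ⊕ Fin (m + 2)) :
    @Eq (PackV (m + 2)) (Sum.inr x) (Sum.inr y) ↔ x = y :=
  ⟨fun h => by injection h, fun h => by rw [h]⟩

@[simp] lemma pv_inl_ne_inr {m : ℕ} (x : Unit) (y : (Fin (m + 2) × Bool) ⊕ Fin (m + 2)) :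
    @Eq (PackV (m + 2)) (Sum.inl x) (Sum.inr y) ↔ False :=
  ⟨fun h => by injection h, False.elim⟩

@[simp] lemma pv_inr_ne_inl {m : ℕ} (x : Unit) (y : (Fin (m + 2) × Bool) ⊕ Fin (m + 2)) :
    @Eq (PackV (m + 2)) (Sum.inr y) (Sum.inl x) ↔ False :=
  ⟨fun h => by injection h, False.elim⟩

@[simp] lemma gsv_inl_inj {n : ℕ} {a : Fin n → ℕ} (x y : Fin 2 ⊕ Fin 2) :
    @Eq (GSV n a) (Sum.inl x) (Sum.inl y) ↔ x = y :=
  ⟨fun h => by injection h, fun h => by rw [h]⟩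

@[simp] lemma gsv_inr_inj {n : ℕ} {a : Fin n → ℕ} (x y : Σ i : Fin n, PackV (a i)) :
    @Eq (GSV n a) (Sum.inr x) (Sum.inr y) ↔ x = y :=
  ⟨fun h => by injection h, fun h => by rw [h]⟩

@[simp] lemma gsv_inl_ne_inr {n : ℕ} {a : Fin n → ℕ} (x : Fin 2 ⊕ Fin 2)
    (y : Σ i : Fin n, PackV (a i)) :
    @Eq (GSV n a) (Sum.inl x) (Sum.inr y) ↔ False :=
  ⟨fun h => by injection h, False.elim⟩

@[simp] lemma gsv_inr_ne_inl {n : ℕ} {a : Fin n → ℕ} (x : Fin 2 ⊕ Fin 2)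
    (y : Σ i : Fin n, PackV (a i)) :
    @Eq (GSV n a) (Sum.inr y) (Sum.inl x) ↔ False :=
  ⟨fun h => by injection h, False.elim⟩

lemma card_eq_of_range {V ι : Type*} (g : ι → V) (hg : Function.Injective g)
    {Q : V → Prop} (h : ∀ w, Q w ↔ ∃ x, w = g x) :
    Nat.card {w // Q w} = Nat.card ι := by
  apply Nat.card_congr
  refine (Equiv.ofBijective (fun x : ι => (⟨g x, (h _).mpr ⟨x, rfl⟩⟩ : {w // Q w})) ⟨?_, ?_⟩).symm
  · intro x y hxy
    exact hg (congrArg Subtype.val hxy)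
  · rintro ⟨w, hw⟩
    obtain ⟨x, rfl⟩ := (h w).mp hw
    exact ⟨x, rfl⟩

lemma card_eq_zero_of {V : Type*} {Q : V → Prop} (h : ∀ w, ¬ Q w) :
    Nat.card {w // Q w} = 0 := by
  have : IsEmpty {w // Q w} := ⟨fun ⟨w, hw⟩ => h w hw⟩
  exact Nat.card_of_isEmpty

lemma card_eq_one_of {V : Type*} {Q : V → Prop} (x : V) (h : ∀ w, Q w ↔ w = x) :
    Nat.card {w // Q w} = 1 := by
  rw [card_eq_of_range (fun _ : Unit => x) (fun _ _ _ => rfl) (by simpa using h)]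
  simp

lemma card_eq_two_of {V : Type*} {Q : V → Prop} (x y : V) (hxy : x ≠ y)
    (h : ∀ w, Q w ↔ w = x ∨ w = y) :
    Nat.card {w // Q w} = 2 := by
  have hg : Function.Injective (fun b : Bool => bif b then x else y) := by
    intro a b hab
    cases a <;> cases b <;> simp_all
  rw [card_eq_of_range _ hg (fun w => by
    rw [h w]
    constructor
    · rintro (rfl | rfl)
      exacts [⟨true, rfl⟩, ⟨false, rfl⟩]
    · rintro ⟨(_ | _), rfl⟩ <;> simp)]
  simp

lemma card_split {V ι : Type*} {P : V → Prop} (col : V → Bool) (g : ι → V)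
    (hg : Function.Injective g) (h : ∀ w, P w ↔ ∃ x, w = g x) (b : Bool) :
    Nat.card {w // P w ∧ col w = b} = Nat.card {x : ι // col (g x) = b} := by
  apply Nat.card_congr
  refine (Equiv.ofBijective (fun x : {x : ι // col (g x) = b} =>
    (⟨g x.1, (h _).mpr ⟨x.1, rfl⟩, x.2⟩ : {w // P w ∧ col w = b})) ⟨?_, ?_⟩).symm
  · intro x y hxy
    exact Subtype.ext (hg (congrArg Subtype.val hxy))
  · rintro ⟨w, hw, hb⟩
    obtain ⟨x, rfl⟩ := (h w).mp hw
    exact ⟨⟨x, hb⟩, rfl⟩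

def packColor (t : Bool) : (m : ℕ) → PackV m → Bool
  | 0, x => x.elim
  | 1, _ => t
  | (_ + 2), Sum.inl _ => !t
  | (_ + 2), Sum.inr (Sum.inl (_, b)) => b
  | (_ + 2), Sum.inr (Sum.inr _) => t

lemma packColor_numeric : ∀ (m : ℕ) (t : Bool) (j : Fin m),
    packColor t m (packNumeric m j) = t
  | 0, _, j => j.elim0
  | 1, _, _ => rfl
  | (_ + 2), _, _ => rfl

lemma packColor_base : ∀ (m : ℕ) (t : Bool) (p : PackV m), isBaseV m p → packColor t m p = !t
  | 0, _, p, _ => p.elim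
  | 1, _, _, h => h.elim
  | (_ + 2), t, p, h => by
      rcases p with _ | (_ | _)
      · rfl
      · exact h.elim
      · exact h.elim

lemma isNumericV_iff : ∀ (m : ℕ), 0 < m → ∀ p : PackV m,
    (isNumericV m p ↔ ∃ j : Fin m, p = packNumeric m j)
  | 0, hm, _ => by omega
  | 1, _, p => by
      simp only [isNumericV, true_iff]
      exact ⟨⟨0, Nat.one_pos⟩, by simp⟩
  | (m + 2), _, p => by
      rcases p with _ | (s | j) <;>
        simp [isNumericV, packNumeric]

lemma packNumeric_inj : ∀ (m : ℕ), Function.Injective (packNumeric m)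
  | 0 => fun j => j.elim0
  | 1 => fun j k _ => Subsingleton.elim j k
  | (m + 2) => fun j k h => by simpa [packNumeric] using h

lemma support_balance (m : ℕ) (t : Bool) :
    Nat.card {p : PackV m // isSupportV m p ∧ packColor t m p = false}
      = Nat.card {p : PackV m // isSupportV m p ∧ packColor t m p = true} := by
  match m with
  | 0 => rw [card_eq_zero_of (fun p => p.elim), card_eq_zero_of (fun p => p.elim)]
  | 1 => rw [card_eq_zero_of (fun p h => h.1), card_eq_zero_of (fun p h => h.1)]
  | (m + 2) =>
    have h1 : ∀ p : PackV (m + 2),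
        (isSupportV (m + 2) p ∧ packColor t (m + 2) p = false)
          ↔ ∃ j : Fin (m + 2), p = Sum.inr (Sum.inl (j, false)) := by
      intro p
      rcases p with _ | (⟨j, b⟩ | j) <;> simp [isSupportV, packColor]
    have h2 : ∀ p : PackV (m + 2),
        (isSupportV (m + 2) p ∧ packColor t (m + 2) p = true)
          ↔ ∃ j : Fin (m + 2), p = Sum.inr (Sum.inl (j, true)) := by
      intro p
      rcases p with _ | (⟨j, b⟩ | j) <;> simp [isSupportV, packColor]
    rw [card_eq_of_range _ (fun x y h => by simpa using h) h1,
        card_eq_of_range _ (fun x y h => by simpa using h) h2]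

lemma count_pack {V : Type*} (colV : V → Bool) (t : Bool) :
    ∀ (m : ℕ), 0 < m → ∀ (p : PackV m) (emb : PackV m → V), Function.Injective emb →
    ∀ (u₁ u₂ : V), (∀ q, u₁ ≠ emb q) → (∀ q, u₂ ≠ emb q) →
    colV u₁ = false → colV u₂ = true → (∀ q, colV (emb q) = packColor t m q) →
    ∀ (P : V → Prop),
    (∀ w, P w ↔ ((isNumericV m p ∧ (w = u₁ ∨ w = u₂)) ∨
      ∃ q, w = emb q ∧ q ≠ p ∧ (packRel m p q ∨ packRel m q p))) →
    Nat.card {w // P w ∧ colV w = true} = Nat.card {w // P w ∧ colV w = false}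
  | 0, hm, _, _, _, _, _, _, _, _, _, _, _, _ => absurd hm (lt_irrefl 0)
  | 1, _, p, emb, hemb, u₁, u₂, h1, h2, hc1, hc2, hce, P, hP => by
    have e1 : Nat.card {w // P w ∧ colV w = true} = 1 := by
      apply card_eq_one_of u₂
      intro w
      constructor
      · rintro ⟨hw, hcw⟩
        rcases (hP w).mp hw with ⟨_, (rfl | rfl)⟩ | ⟨q, rfl, _, hrel | hrel⟩
        · rw [hc1] at hcw; cases hcw
        · rfl
        · exact hrel.elim
        · exact hrel.elim
      · rintro rfl
        exact ⟨(hP _).mpr (Or.inl ⟨trivial, Or.inr rfl⟩), hc2⟩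
    have e2 : Nat.card {w // P w ∧ colV w = false} = 1 := by
      apply card_eq_one_of u₁
      intro w
      constructor
      · rintro ⟨hw, hcw⟩
        rcases (hP w).mp hw with ⟨_, (rfl | rfl)⟩ | ⟨q, rfl, _, hrel | hrel⟩
        · rfl
        · rw [hc2] at hcw; cases hcw
        · exact hrel.elim
        · exact hrel.elim
      · rintro rfl
        exact ⟨(hP _).mpr (Or.inl ⟨trivial, Or.inl rfl⟩), hc1⟩
    rw [e1, e2]
  | (m + 2), _, p, emb, hemb, u₁, u₂, h1, h2, hc1, hc2, hce, P, hP => by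
    rcases p with u | (⟨j, b⟩ | j)
    · -- base vertex
      have e : ∀ b' : Bool, Nat.card {w // P w ∧ colV w = b'} = Nat.card (Fin (m + 2)) := by
        intro b'
        apply card_eq_of_range
          (fun j : Fin (m + 2) => emb (Sum.inr (Sum.inl (j, b'))))
          (fun x y h => by have := hemb h; simpa using this)
        intro w
        constructor
        · rintro ⟨hw, hcw⟩
          rcases (hP w).mp hw with ⟨hnum, _⟩ | ⟨q, rfl, hq, hrel⟩
          · simp [isNumericV] at hnum
          · rcases q with u' | (⟨j', b''⟩ | j')
            · simp [packRel] at hrel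
            · rw [hce] at hcw
              simp only [packColor] at hcw
              exact ⟨j', by rw [hcw]⟩
            · simp [packRel] at hrel
        · rintro ⟨j', rfl⟩
          refine ⟨(hP _).mpr (Or.inr ⟨Sum.inr (Sum.inl (j', b')), rfl, by simp,
            Or.inl (by simp [packRel])⟩), (hce _).trans rfl⟩
      rw [e true, e false]
    · -- support vertex
      have etrue : ∀ b' : Bool, Nat.card {w // P w ∧ colV w = b'} = 1 := by
        intro b'
        apply card_eq_one_of (emb (if t = b' then Sum.inr (Sum.inr j) else Sum.inl ()))
        intro w
        constructor
        · rintro ⟨hw, hcw⟩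
          rcases (hP w).mp hw with ⟨hnum, _⟩ | ⟨q, rfl, hq, hrel⟩
          · simp [isNumericV] at hnum
          · rcases q with u' | (⟨j', b''⟩ | j')
            · -- base neighbour, colour !t
              rw [hce] at hcw
              simp only [packColor] at hcw
              have ht : t ≠ b' := by
                cases t <;> cases b' <;> simp_all
              simp [if_neg ht]
            · simp [packRel] at hrel
            · -- numeric neighbour j, colour t
              have hj : j = j' := by
                rcases hrel with hrel | hrel <;> simp [packRel] at hrel <;> tauto
              subst hj
              rw [hce] at hcw
              simp only [packColor] at hcw
              simp [if_pos hcw]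
        · rintro rfl
          by_cases ht : t = b'
          · rw [if_pos ht]
            refine ⟨(hP _).mpr (Or.inr ⟨Sum.inr (Sum.inr j), rfl, by simp,
              Or.inl (by simp [packRel])⟩), by rw [hce]; simpa [packColor] using ht⟩
          · rw [if_neg ht]
            refine ⟨(hP _).mpr (Or.inr ⟨Sum.inl (), rfl, by simp,
              Or.inr (by simp [packRel])⟩), by
                rw [hce]
                simp only [packColor]
                cases t <;> cases b' <;> simp_all⟩
      rw [etrue true, etrue false]
    · -- numeric vertex
      have e1 : Nat.card {w // P w ∧ colV w = true} = 2 := by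
        apply card_eq_two_of u₂ (emb (Sum.inr (Sum.inl (j, true)))) (h2 _)
        intro w
        constructor
        · rintro ⟨hw, hcw⟩
          rcases (hP w).mp hw with ⟨hnum, (rfl | rfl)⟩ | ⟨q, rfl, hq, hrel⟩
          · rw [hc1] at hcw; cases hcw
          · exact Or.inl rfl
          · rcases q with u' | (⟨j', b''⟩ | j')
            · simp [packRel] at hrel
            · have hj : j' = j := by
                rcases hrel with hrel | hrel <;> simp [packRel] at hrel <;> tauto
              subst hj
              rw [hce] at hcw
              simp only [packColor] at hcw
              exact Or.inr (by rw [hcw])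
            · simp [packRel] at hrel
        · rintro (rfl | rfl)
          · exact ⟨(hP _).mpr (Or.inl ⟨by simp [isNumericV], Or.inr rfl⟩), hc2⟩
          · exact ⟨(hP _).mpr (Or.inr ⟨Sum.inr (Sum.inl (j, true)), rfl, by simp,
              Or.inr (by simp [packRel])⟩), (hce _).trans rfl⟩
      have e2 : Nat.card {w // P w ∧ colV w = false} = 2 := by
        apply card_eq_two_of u₁ (emb (Sum.inr (Sum.inl (j, false)))) (h1 _)
        intro w
        constructor
        · rintro ⟨hw, hcw⟩
          rcases (hP w).mp hw with ⟨hnum, (rfl | rfl)⟩ | ⟨q, rfl, hq, hrel⟩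
          · exact Or.inl rfl
          · rw [hc2] at hcw; cases hcw
          · rcases q with u' | (⟨j', b''⟩ | j')
            · simp [packRel] at hrel
            · have hj : j' = j := by
                rcases hrel with hrel | hrel <;> simp [packRel] at hrel <;> tauto
              subst hj
              rw [hce] at hcw
              simp only [packColor] at hcw
              exact Or.inr (by rw [hcw])
            · simp [packRel] at hrel
        · rintro (rfl | rfl)
          · exact ⟨(hP _).mpr (Or.inl ⟨by simp [isNumericV], Or.inl rfl⟩), hc1⟩
          · exact ⟨(hP _).mpr (Or.inr ⟨Sum.inr (Sum.inl (j, false)), rfl, by simp,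
              Or.inr (by simp [packRel])⟩), (hce _).trans rfl⟩
      rw [e1, e2]

def col (n : ℕ) (a : Fin n → ℕ) (T : Finset (Fin n)) : GSV n a → Bool
  | Sum.inl (Sum.inl k) => decide (k = 1)
  | Sum.inl (Sum.inr k) => decide (k = 0)
  | Sum.inr ⟨i, p⟩ => packColor (decide (i ∈ T)) (a i) p

def gV (n : ℕ) (a : Fin n → ℕ) : Fin 2 ⊕ (Σ i : Fin n, Fin (a i)) → GSV n a
  | Sum.inl j => Sum.inl (Sum.inr j)
  | Sum.inr ⟨i, j⟩ => Sum.inr ⟨i, packNumeric (a i) j⟩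

lemma gV_inj (n : ℕ) (a : Fin n → ℕ) : Function.Injective (gV n a) := by
  rintro (j | ⟨i, j⟩) (j' | ⟨i', j'⟩) h <;> simp [gV] at h ⊢
  · exact h
  · obtain ⟨rfl, h2⟩ := h
    rw [heq_iff_eq] at h2
    exact ⟨rfl, heq_of_eq (packNumeric_inj _ h2)⟩

lemma exists_self_eq {α : Sort*} {i : α} (P : i = i → Prop) : (∃ h : i = i, P h) ↔ P rfl :=
  ⟨fun ⟨h, hp⟩ => (Subsingleton.elim h rfl) ▸ hp, fun hp => ⟨rfl, hp⟩⟩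

lemma key_v (n : ℕ) (a : Fin n → ℕ) (ha : ∀ i, 0 < a i) (k : Fin 2) (w : GSV n a) :
    (GS n a).Adj (Sum.inl (Sum.inl k)) w ↔ ∃ x, w = gV n a x := by
  rw [GS, SimpleGraph.fromRel_adj]
  rcases w with (k' | k') | ⟨i, p⟩
  · constructor
    · rintro ⟨-, h | h⟩ <;> simp [GSRel] at h
    · rintro ⟨(j | ⟨i, j⟩), h⟩ <;> simp [gV] at h
  · constructor
    · rintro -
      exact ⟨Sum.inl k', rfl⟩
    · rintro -
      refine ⟨by simp, Or.inl ?_⟩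
      simp [GSRel]
  · constructor
    · rintro ⟨-, h | h⟩
      · have hnum : isNumericV (a i) p := h
        obtain ⟨j, rfl⟩ := (isNumericV_iff (a i) (ha i) p).mp hnum
        exact ⟨Sum.inr ⟨i, j⟩, rfl⟩
      · simp [GSRel] at h
    · rintro ⟨(j | ⟨i', j⟩), h⟩
      · simp [gV] at h
      · simp only [gV] at h
        rw [gsv_inr_inj] at h
        obtain ⟨rfl, h2⟩ := Sigma.mk.inj_iff.mp h
        rw [heq_iff_eq] at h2
        subst h2
        refine ⟨by simp, Or.inl ?_⟩
        show isNumericV (a i) (packNumeric (a i) j)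
        exact (isNumericV_iff (a i) (ha i) _).mpr ⟨j, rfl⟩

lemma key_pack (n : ℕ) (a : Fin n → ℕ) (i : Fin n) (p : PackV (a i)) (w : GSV n a) :
    (GS n a).Adj (Sum.inr ⟨i, p⟩) w ↔
      ((isNumericV (a i) p ∧
          (w = Sum.inl (Sum.inl 0) ∨ w = Sum.inl (Sum.inl 1))) ∨
        ∃ q, w = Sum.inr ⟨i, q⟩ ∧ q ≠ p ∧ (packRel (a i) p q ∨ packRel (a i) q p)) := by
  rw [GS, SimpleGraph.fromRel_adj]
  rcases w with (k | k) | ⟨i', q⟩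
  · constructor
    · rintro ⟨-, h | h⟩
      · simp [GSRel] at h
      · have hnum : isNumericV (a i) p := h
        refine Or.inl ⟨hnum, ?_⟩
        have : k = 0 ∨ k = 1 := by omega
        rcases this with rfl | rfl
        · exact Or.inl rfl
        · exact Or.inr rfl
    · rintro (⟨hnum, h⟩ | ⟨q, h, -⟩)
      · refine ⟨by simp, Or.inr hnum⟩
      · simp at h
  · constructor
    · rintro ⟨-, h | h⟩ <;> simp [GSRel] at h
    · rintro (⟨-, h | h⟩ | ⟨q, h, -⟩) <;> simp at h
  · by_cases hii : i = i'
    · subst hii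
      constructor
      · rintro ⟨hne, h | h⟩
        · simp only [GSRel] at h
          obtain ⟨-, h⟩ := h
          refine Or.inr ⟨q, rfl, ?_, Or.inl h⟩
          intro hqp
          subst hqp
          exact hne rfl
        · simp only [GSRel] at h
          obtain ⟨-, h⟩ := h
          refine Or.inr ⟨q, rfl, ?_, Or.inr h⟩
          intro hqp
          subst hqp
          exact hne rfl
      · rintro (⟨-, h | h⟩ | ⟨q', h, hq, hrel⟩)
        · simp at h
        · simp at h
        · rw [gsv_inr_inj] at h
          obtain ⟨-, h2⟩ := Sigma.mk.inj_iff.mp h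
          rw [heq_iff_eq] at h2
          subst h2
          refine ⟨?_, ?_⟩
          · intro hc
            rw [gsv_inr_inj] at hc
            obtain ⟨-, hc2⟩ := Sigma.mk.inj_iff.mp hc
            rw [heq_iff_eq] at hc2
            exact hq hc2.symm
          · rcases hrel with hrel | hrel
            · exact Or.inl ⟨rfl, hrel⟩
            · exact Or.inr ⟨rfl, hrel⟩
    · constructor
      · rintro ⟨-, h | h⟩
        · simp only [GSRel] at h
          obtain ⟨hh, -⟩ := h
          exact absurd hh hii
        · simp only [GSRel] at h
          obtain ⟨hh, -⟩ := h
          exact absurd hh.symm hii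
      · rintro (⟨-, h | h⟩ | ⟨q', h, -⟩)
        · simp at h
        · simp at h
        · rw [gsv_inr_inj] at h
          obtain ⟨hh, -⟩ := Sigma.mk.inj_iff.mp h
          exact absurd hh.symm hii

lemma key_kvert (n : ℕ) (a : Fin n → ℕ) (k : Fin 2) (w : GSV n a) :
    (GS n a).Adj (Sum.inl (Sum.inr k)) w ↔
      (w = Sum.inl (Sum.inl 0) ∨ w = Sum.inl (Sum.inl 1)) := by
  rw [GS, SimpleGraph.fromRel_adj]
  rcases w with (k' | k') | ⟨i, p⟩
  · constructor
    · rintro -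
      have : k' = 0 ∨ k' = 1 := by omega
      rcases this with rfl | rfl
      · exact Or.inl rfl
      · exact Or.inr rfl
    · rintro -
      refine ⟨by simp, Or.inr ?_⟩
      simp [GSRel]
  · constructor
    · rintro ⟨-, h | h⟩ <;> simp [GSRel] at h
    · rintro (h | h) <;> simp at h
  · constructor
    · rintro ⟨-, h | h⟩ <;> simp [GSRel] at h
    · rintro (h | h) <;> simp at h

end Aux

/-- **Completeness of the reduction.** If the multiset `S = {a 0, …, a (n-1)}`
of positive integers can be partitioned into two sub-multisets (indexed by
`T` and `Tᶜ`) with equal sums, then `G(S)` admits a Neighborhood Balanced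
Coloring (`true` = red, `false` = blue) of the described shape: `v₁` is blue,
`v₂` is red, the other two vertices of the `K_{2,2}` are red and blue
respectively; for `i ∈ T` the `a i`-pack has a blue base vertex, red numeric
vertices, and exactly half of its support vertices blue and half red; and
symmetrically (red base, blue numeric vertices, half of the support vertices
of each color) for `i ∉ T`. -/
theorem partition_gives_GS_NBC (n : ℕ) (a : Fin n → ℕ) (ha : ∀ i, 0 < a i)
    (T : Finset (Fin n)) (hT : ∑ i ∈ T, a i = ∑ i ∈ Tᶜ, a i) :
    ∃ c : GSV n a → Bool, IsNBC (GS n a) c ∧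
      c (Sum.inl (Sum.inl 0)) = false ∧
      c (Sum.inl (Sum.inl 1)) = true ∧
      c (Sum.inl (Sum.inr 0)) = true ∧
      c (Sum.inl (Sum.inr 1)) = false ∧
      (∀ i ∈ T,
        (∀ p : PackV (a i), isBaseV (a i) p → c (Sum.inr ⟨i, p⟩) = false) ∧
        (∀ j : Fin (a i), c (numVert n a i j) = true) ∧
        Nat.card {p : PackV (a i) // isSupportV (a i) p ∧ c (Sum.inr ⟨i, p⟩) = false}
          = Nat.card {p : PackV (a i) // isSupportV (a i) p ∧ c (Sum.inr ⟨i, p⟩) = true}) ∧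
      (∀ i ∈ Tᶜ,
        (∀ p : PackV (a i), isBaseV (a i) p → c (Sum.inr ⟨i, p⟩) = true) ∧
        (∀ j : Fin (a i), c (numVert n a i j) = false) ∧
        Nat.card {p : PackV (a i) // isSupportV (a i) p ∧ c (Sum.inr ⟨i, p⟩) = false}
          = Nat.card {p : PackV (a i) // isSupportV (a i) p ∧ c (Sum.inr ⟨i, p⟩) = true}) := by
  classical
  refine ⟨col n a T, ?_, by simp [col], by simp [col], by simp [col], by simp [col], ?_, ?_⟩
  · -- the NBC property
    intro v
    rcases v with (k | k) | ⟨i, p⟩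
    · -- v₁ or v₂
      rw [card_split (col n a T) (gV n a) (gV_inj n a) (key_v n a ha k) true,
          card_split (col n a T) (gV n a) (gV_inj n a) (key_v n a ha k) false]
      rw [Nat.card_congr (Equiv.subtypeSum
            (p := fun x => col n a T (gV n a x) = true)), Nat.card_sum,
          Nat.card_congr (Equiv.subtypeSum
            (p := fun x => col n a T (gV n a x) = false)), Nat.card_sum]
      have c1t : Nat.card {j : Fin 2 // col n a T (gV n a (Sum.inl j)) = true} = 1 := by
        apply card_eq_one_of (0 : Fin 2)
        intro j
        fin_cases j <;> simp [gV, col]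
      have c1f : Nat.card {j : Fin 2 // col n a T (gV n a (Sum.inl j)) = false} = 1 := by
        apply card_eq_one_of (1 : Fin 2)
        intro j
        fin_cases j <;> simp [gV, col]
      have hsig : ∀ (s : Finset (Fin n)) (b : Bool),
          (∀ i : Fin n, (decide (i ∈ T) = b) ↔ i ∈ s) →
          Nat.card {y : Σ i : Fin n, Fin (a i) // col n a T (gV n a (Sum.inr y)) = b}
            = ∑ i ∈ s, a i := by
        intro s b hs
        have he : ∀ y : Σ i : Fin n, Fin (a i),
            col n a T (gV n a (Sum.inr y)) = b ↔ y.1 ∈ s := by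
          rintro ⟨i, j⟩
          show packColor (decide (i ∈ T)) (a i) (packNumeric (a i) j) = b ↔ i ∈ s
          rw [packColor_numeric]
          exact hs i
        rw [Nat.card_congr (Equiv.subtypeEquivRight he),
            Nat.card_congr (Equiv.subtypeSigmaEquiv (fun i : Fin n => Fin (a i))
              (fun i => i ∈ s)),
            Nat.card_eq_fintype_card, Fintype.card_sigma]
        simp only [Fintype.card_fin]
        exact (Finset.sum_subtype s (fun x => Iff.rfl) a).symm
      rw [hsig T true (fun i => by simp), hsig Tᶜ false (fun i => by simp), c1t, c1f, hT]
    · -- the two other K₂,₂ vertices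
      have e1 : Nat.card {w // (GS n a).Adj (Sum.inl (Sum.inr k)) w ∧ col n a T w = true}
          = 1 := by
        apply card_eq_one_of (Sum.inl (Sum.inl 1) : GSV n a)
        intro w
        rw [key_kvert]
        constructor
        · rintro ⟨rfl | rfl, hc⟩
          · simp [col] at hc
          · rfl
        · rintro rfl
          exact ⟨Or.inr rfl, by simp [col]⟩
      have e2 : Nat.card {w // (GS n a).Adj (Sum.inl (Sum.inr k)) w ∧ col n a T w = false}
          = 1 := by
        apply card_eq_one_of (Sum.inl (Sum.inl 0) : GSV n a)
        intro w
        rw [key_kvert]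
        constructor
        · rintro ⟨rfl | rfl, hc⟩
          · rfl
          · simp [col] at hc
        · rintro rfl
          exact ⟨Or.inl rfl, by simp [col]⟩
      rw [e1, e2]
    · -- pack vertices
      exact count_pack (col n a T) (decide (i ∈ T)) (a i) (ha i) p
        (fun q => Sum.inr ⟨i, q⟩)
        (fun x y h => by
          rw [gsv_inr_inj] at h
          obtain ⟨-, h2⟩ := Sigma.mk.inj_iff.mp h
          exact heq_iff_eq.mp h2)
        (Sum.inl (Sum.inl 0)) (Sum.inl (Sum.inl 1))
        (fun q => by simp) (fun q => by simp)
        (by simp [col]) (by simp [col]) (fun q => rfl)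
        ((GS n a).Adj (Sum.inr ⟨i, p⟩)) (key_pack n a i p)
  · -- packs with index in T
    intro i hi
    refine ⟨fun p hb => ?_, fun j => ?_, ?_⟩
    · show packColor (decide (i ∈ T)) (a i) p = false
      rw [packColor_base _ _ _ hb]
      simp [hi]
    · show packColor (decide (i ∈ T)) (a i) (packNumeric (a i) j) = true
      rw [packColor_numeric]
      simp [hi]
    · exact support_balance (a i) (decide (i ∈ T))
  · -- packs with index in Tᶜ
    intro i hi
    rw [Finset.mem_compl] at hi
    refine ⟨fun p hb => ?_, fun j => ?_, ?_⟩
    · show packColor (decide (i ∈ T)) (a i) p = true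
      rw [packColor_base _ _ _ hb]
      simp [hi]
    · show packColor (decide (i ∈ T)) (a i) (packNumeric (a i) j) = false
      rw [packColor_numeric]
      simp [hi]
    · exact support_balance (a i) (decide (i ∈ T))
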